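/- Assume n ≥ 2, τ ≠ 0, p ≥ 0, all diagonal entries rᵢ of R are nonzero, and L·1ₙ = 0 (every row of L sums to zero). Then λ = 1 is a root of algebraic multiplicity exactly 2 of the characteristic polynomial of A if and only if κ₁ ≠ κ₂, p > 0, and 0 is a simple root (algebraic multiplicity 1) of the characteristic polynomial of L·R. -/

import Mathlib

open Matrix Polynomial

/-- The 3n×3n transition matrix of the skewless clock-synchronization algorithm. -/
noncomputable def Amat (n : ℕ) (τ κ₁ κ₂ p : ℝ) (L R : Matrix (Fin n) (Fin n) ℝ) :
    Matrix (Fin n ⊕ Fin n ⊕ Fin n) (Fin n ⊕ Fin n ⊕ Fin n) ℝ :=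
  Matrix.fromBlocks 1 (Matrix.fromCols (τ • R) 0)
    (Matrix.fromRows ((-κ₁) • L) ((-p) • L))
    (Matrix.fromBlocks 1 ((-κ₂) • (1 : Matrix (Fin n) (Fin n) ℝ)) 0
      ((1 - p) • (1 : Matrix (Fin n) (Fin n) ℝ)))

lemma eval_charpoly'' {m : Type*} [DecidableEq m] [Fintype m] {K : Type*} [CommRing K]
    (M : Matrix m m K) (x : K) : M.charpoly.eval x = (x • (1 : Matrix m m K) - M).det := by
  rw [Matrix.charpoly, ← Polynomial.coe_evalRingHom, RingHom.map_det]
  congr 1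
  ext i j
  by_cases h : i = j <;>
    simp [Matrix.charmatrix_apply, Matrix.one_apply, h, Matrix.diagonal_apply]

lemma det_block (n : ℕ) (τ κ₁ κ₂ p a b : ℝ) (L R : Matrix (Fin n) (Fin n) ℝ)
    (ha : a ≠ 0) (hb : b ≠ 0) :
    (Matrix.fromBlocks (a • 1) (Matrix.fromCols ((-τ) • R) 0)
        (Matrix.fromRows (κ₁ • L) (p • L))
        (Matrix.fromBlocks (a • 1) (κ₂ • (1 : Matrix (Fin n) (Fin n) ℝ)) 0
          (b • (1 : Matrix (Fin n) (Fin n) ℝ)))).det =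
      ((a ^ 2 * b) • 1 + (τ * (κ₁ * b - κ₂ * p)) • (L * R)).det := by
  letI : Invertible (a • (1 : Matrix (Fin n) (Fin n) ℝ)) :=
    ⟨a⁻¹ • 1, by simp [smul_smul, inv_mul_cancel₀ ha, mul_inv_cancel₀ ha],
      by simp [smul_smul, inv_mul_cancel₀ ha, mul_inv_cancel₀ ha]⟩
  letI : Invertible (b • (1 : Matrix (Fin n) (Fin n) ℝ)) :=
    ⟨b⁻¹ • 1, by simp [smul_smul, inv_mul_cancel₀ hb, mul_inv_cancel₀ hb],
      by simp [smul_smul, inv_mul_cancel₀ hb, mul_inv_cancel₀ hb]⟩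
  have hia : ⅟(a • (1 : Matrix (Fin n) (Fin n) ℝ)) = a⁻¹ • 1 := rfl
  have hib : ⅟(b • (1 : Matrix (Fin n) (Fin n) ℝ)) = b⁻¹ • 1 := rfl
  rw [Matrix.det_fromBlocks₁₁, hia]
  have h1 : Matrix.fromRows (κ₁ • L) (p • L) * (a⁻¹ • (1 : Matrix (Fin n) (Fin n) ℝ)) *
      Matrix.fromCols ((-τ) • R) (0 : Matrix (Fin n) (Fin n) ℝ) =
      Matrix.fromBlocks ((a⁻¹ * (-τ * κ₁)) • (L * R)) (0 : Matrix (Fin n) (Fin n) ℝ)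
        ((a⁻¹ * (-τ * p)) • (L * R)) (0 : Matrix (Fin n) (Fin n) ℝ) := by
    rw [Matrix.mul_smul, Matrix.mul_one, Matrix.smul_mul, Matrix.fromRows_mul_fromCols]
    simp only [Matrix.mul_zero, Matrix.smul_mul, Matrix.mul_smul,
      Matrix.fromBlocks_smul, smul_smul, smul_zero]
  rw [h1]
  have h2 : Matrix.fromBlocks (a • 1) (κ₂ • (1 : Matrix (Fin n) (Fin n) ℝ)) 0
        (b • (1 : Matrix (Fin n) (Fin n) ℝ)) -
      Matrix.fromBlocks ((a⁻¹ * (-τ * κ₁)) • (L * R)) (0 : Matrix (Fin n) (Fin n) ℝ)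
        ((a⁻¹ * (-τ * p)) • (L * R)) (0 : Matrix (Fin n) (Fin n) ℝ) =
      Matrix.fromBlocks (a • 1 - (a⁻¹ * (-τ * κ₁)) • (L * R)) (κ₂ • 1)
        (-((a⁻¹ * (-τ * p)) • (L * R))) (b • 1) := by
    ext (i | i) (j | j) <;> simp
  rw [h2, Matrix.det_fromBlocks₂₂, hib]
  have h3 : a • (1 : Matrix (Fin n) (Fin n) ℝ) - (a⁻¹ * (-τ * κ₁)) • (L * R) -
      κ₂ • (1 : Matrix (Fin n) (Fin n) ℝ) * (b⁻¹ • 1) * (-((a⁻¹ * (-τ * p)) • (L * R))) =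
      a • 1 + (a⁻¹ * κ₁ * τ - κ₂ * b⁻¹ * (a⁻¹ * p * τ)) • (L * R) := by
    simp only [Matrix.mul_neg, Matrix.mul_smul, Matrix.smul_mul, Matrix.mul_one,
      Matrix.one_mul, smul_smul]
    module
  rw [h3]
  have h4 : ((a ^ 2 * b) • (1 : Matrix (Fin n) (Fin n) ℝ) + (τ * (κ₁ * b - κ₂ * p)) • (L * R)) =
      (a * b) • (a • 1 + (a⁻¹ * κ₁ * τ - κ₂ * b⁻¹ * (a⁻¹ * p * τ)) • (L * R)) := by
    rw [smul_add, smul_smul, smul_smul]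
    congr 2
    · ring
    · field_simp
  rw [h4, Matrix.det_smul, Matrix.det_smul, Matrix.det_smul, Matrix.det_one]
  simp [mul_pow]
  ring

lemma smul_one_sub_Amat (n : ℕ) (τ κ₁ κ₂ p : ℝ) (L R : Matrix (Fin n) (Fin n) ℝ) (x : ℝ) :
    x • (1 : Matrix (Fin n ⊕ Fin n ⊕ Fin n) (Fin n ⊕ Fin n ⊕ Fin n) ℝ) - Amat n τ κ₁ κ₂ p L R =
      Matrix.fromBlocks ((x - 1) • 1) (Matrix.fromCols ((-τ) • R) 0)
        (Matrix.fromRows (κ₁ • L) (p • L))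
        (Matrix.fromBlocks ((x - 1) • 1) (κ₂ • (1 : Matrix (Fin n) (Fin n) ℝ)) 0
          ((x - 1 + p) • (1 : Matrix (Fin n) (Fin n) ℝ))) := by
  ext (i | i | i) (j | j | j) <;>
    simp [Amat, Matrix.one_apply] <;>
    split_ifs <;> ring


lemma eval_det_comb' {K : Type*} [CommRing K] (n : ℕ) (M : Matrix (Fin n) (Fin n) K)
    (f g : K[X]) (x : K) :
    Polynomial.eval x ((f • (1 : Matrix (Fin n) (Fin n) K[X]) + g • (M.map C)).det) =
      ((f.eval x) • (1 : Matrix (Fin n) (Fin n) K) + (g.eval x) • M).det := by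
  rw [← Polynomial.coe_evalRingHom, RingHom.map_det]
  congr 1
  ext i j
  by_cases h : i = j <;> simp [Matrix.map_apply, Matrix.one_apply, h, smul_eq_mul]

lemma det_comb_eq_prod (n : ℕ) (M : Matrix (Fin n) (Fin n) ℂ) (f g : ℂ[X]) :
    (f • (1 : Matrix (Fin n) (Fin n) ℂ[X]) + g • (M.map C)).det =
      (M.charpoly.roots.map (fun ν => f + C ν * g)).prod := by
  have hmonic := M.charpoly_monic
  have hsplits : M.charpoly.Splits := IsAlgClosed.splits _
  have hcard : M.charpoly.roots.card = n := by
    rw [splits_iff_card_roots.mp hsplits, Matrix.charpoly_natDegree_eq_dim]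
    simp
  have hfact : M.charpoly = (M.charpoly.roots.map (fun ν => X - C ν)).prod :=
    hsplits.eq_prod_roots_of_monic hmonic
  by_cases hg : g = 0
  · subst hg
    simp only [zero_smul, add_zero, mul_zero, Matrix.det_smul, Matrix.det_one, mul_one]
    rw [Multiset.map_const', Multiset.prod_replicate, hcard]
    simp
  · rw [← sub_eq_zero]
    apply Polynomial.eq_zero_of_infinite_isRoot
    apply Set.Infinite.mono (s := {x : ℂ | IsRoot g x}ᶜ)
    swap
    · exact (Polynomial.finite_setOf_isRoot hg).infinite_compl
    intro z hz
    simp only [Set.mem_compl_iff, Set.mem_setOf_eq, IsRoot.def] at hz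
    simp only [Set.mem_setOf_eq, IsRoot.def, eval_sub, sub_eq_zero]
    rw [eval_det_comb']
    set c := f.eval z with hc
    set d := g.eval z with hd
    -- LHS: det (c • 1 + d • M)
    have h1 : c • (1 : Matrix (Fin n) (Fin n) ℂ) + d • M =
        d • ((d⁻¹ * c) • 1 + M) := by
      rw [smul_add, smul_smul]
      congr 2
      field_simp
    have h2 : (d⁻¹ * c) • (1 : Matrix (Fin n) (Fin n) ℂ) + M =
        (-1 : ℂ) • ((-(d⁻¹ * c)) • 1 - M) := by
      rw [smul_sub, smul_smul]
      simp
    rw [h1, Matrix.det_smul, h2, Matrix.det_smul, ← eval_charpoly'',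
      Fintype.card_fin]
    have h4 : ∀ ν ∈ M.charpoly.roots,
        (eval (-(d⁻¹ * c)) ∘ fun ν => X - C ν) ν = -(d⁻¹ * c) - ν := by
      intro ν _; simp
    have hev : M.charpoly.eval (-(d⁻¹ * c)) =
        (M.charpoly.roots.map (fun ν => -(d⁻¹ * c) - ν)).prod := by
      conv_lhs => rw [hfact]
      rw [eval_multiset_prod, Multiset.map_map, Multiset.map_congr rfl h4]
    rw [hev]
    -- RHS
    rw [eval_multiset_prod, Multiset.map_map]
    have h3 : ∀ ν ∈ M.charpoly.roots,
        (eval z ∘ fun ν => f + C ν * g) ν = c + d * ν := by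
      intro ν _; simp [hc, hd]; ring
    rw [Multiset.map_congr rfl h3]
    have h5 : ∀ ν ∈ M.charpoly.roots,
        c + d * ν = (-d) * (-(d⁻¹ * c) - ν) := by
      intro ν _; field_simp; ring
    rw [Multiset.map_congr rfl h5]
    have : (M.charpoly.roots.map (fun ν => (-d) * (-(d⁻¹ * c) - ν))).prod =
        ((M.charpoly.roots.map (fun _ => (-d : ℂ))).prod *
          (M.charpoly.roots.map (fun ν => -(d⁻¹ * c) - ν)).prod) := by
      rw [← Multiset.prod_map_mul]
    rw [this, Multiset.map_const', Multiset.prod_replicate, hcard, neg_pow]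
    ring

noncomputable def fpol (p : ℝ) : ℝ[X] := ((X : ℝ[X]) - 1) ^ 2 * (X - 1 + C p)
noncomputable def gpol (τ κ₁ κ₂ p : ℝ) : ℝ[X] := C (τ * κ₁) * X + C (τ * (κ₁ * (p - 1)) - τ * (κ₂ * p))

lemma charpoly_Amat (n : ℕ) (τ κ₁ κ₂ p : ℝ) (L R : Matrix (Fin n) (Fin n) ℝ) :
    (Amat n τ κ₁ κ₂ p L R).charpoly =
      ((fpol p) • (1 : Matrix (Fin n) (Fin n) ℝ[X]) + (gpol τ κ₁ κ₂ p) • ((L * R).map C)).det := by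
  rw [← sub_eq_zero]
  apply Polynomial.eq_zero_of_infinite_isRoot
  apply Set.Infinite.mono (s := ({(1 : ℝ), 1 - p} : Set ℝ)ᶜ)
  swap
  · exact (Set.toFinite _).infinite_compl
  intro x hx
  simp only [Set.mem_compl_iff, Set.mem_insert_iff, Set.mem_singleton_iff, not_or] at hx
  obtain ⟨hx1, hx2⟩ := hx
  have ha : x - 1 ≠ 0 := sub_ne_zero.mpr hx1
  have hb : x - 1 + p ≠ 0 := by
    intro h; apply hx2; linarith
  simp only [Set.mem_setOf_eq, IsRoot.def, eval_sub, sub_eq_zero]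
  rw [eval_charpoly'', smul_one_sub_Amat, det_block n τ κ₁ κ₂ p (x-1) (x-1+p) L R ha hb,
    eval_det_comb']
  congr 2
  · simp [fpol]
  · simp [gpol]; ring

noncomputable def Fc (p : ℝ) : ℂ[X] :=
  ((X : ℂ[X]) - C 1) ^ 2 * (X - C 1 + C ((p : ℝ) : ℂ))

noncomputable def Gc (τ κ₁ κ₂ p : ℝ) : ℂ[X] :=
  C (((τ * κ₁ : ℝ)) : ℂ) * X + C (((τ * (κ₁ * (p - 1)) - τ * (κ₂ * p) : ℝ)) : ℂ)

noncomputable def hfac (τ κ₁ κ₂ p : ℝ) (ν : ℂ) : ℂ[X] :=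
  Fc p + C ν * Gc τ κ₁ κ₂ p

lemma Fc_monic (p : ℝ) : (Fc p).Monic := by
  have : ((X : ℂ[X]) - C 1 + C ((p : ℝ) : ℂ)) = X - C (1 - (p : ℂ)) := by
    rw [map_sub]; ring
  rw [Fc, this]
  exact ((monic_X_sub_C _).pow 2).mul (monic_X_sub_C _)

lemma Fc_natDegree (p : ℝ) : (Fc p).natDegree = 3 := by
  have : ((X : ℂ[X]) - C 1 + C ((p : ℝ) : ℂ)) = X - C (1 - (p : ℂ)) := by
    rw [map_sub]; ring
  rw [Fc, this, ((monic_X_sub_C (1:ℂ)).pow 2).natDegree_mul (monic_X_sub_C _)]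
  have e1 : ((X : ℂ[X]) - C 1) ^ 2 = (X - C 1) ^ 2 := rfl
  rw [natDegree_pow, natDegree_X_sub_C, natDegree_X_sub_C]

lemma Gc_natDegree_le (τ κ₁ κ₂ p : ℝ) : (Gc τ κ₁ κ₂ p).natDegree ≤ 1 := by
  refine le_trans (natDegree_add_le _ _) (max_le ?_ ?_)
  · exact le_trans (natDegree_C_mul_le _ _) (by simp)
  · exact le_trans (natDegree_C _).le (by norm_num)

lemma hfac_ne (τ κ₁ κ₂ p : ℝ) (ν : ℂ) : hfac τ κ₁ κ₂ p ν ≠ 0 := by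
  intro h
  have h3 : (hfac τ κ₁ κ₂ p ν).coeff 3 = 1 := by
    rw [hfac, coeff_add]
    have e1 : (Fc p).coeff 3 = 1 := by
      have := (Fc_monic p).coeff_natDegree
      rwa [Fc_natDegree] at this
    have e2 : (C ν * Gc τ κ₁ κ₂ p).coeff 3 = 0 := by
      apply coeff_eq_zero_of_natDegree_lt
      exact lt_of_le_of_lt (le_trans (natDegree_C_mul_le _ _) (Gc_natDegree_le τ κ₁ κ₂ p))
        (by norm_num)
    rw [e1, e2, add_zero]
  rw [h] at h3
  simp at h3

lemma eval_one_Fc (p : ℝ) : (Fc p).eval 1 = 0 := by simp [Fc]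

lemma eval_one_Gc (τ κ₁ κ₂ p : ℝ) :
    (Gc τ κ₁ κ₂ p).eval 1 = ((τ * p * (κ₁ - κ₂) : ℝ) : ℂ) := by
  simp only [Gc, eval_add, eval_mul, eval_C, eval_X, mul_one, Complex.ofReal_sub, Complex.ofReal_one,
    Complex.ofReal_mul]
  ring

lemma eval_one_hfac (τ κ₁ κ₂ p : ℝ) (ν : ℂ) :
    (hfac τ κ₁ κ₂ p ν).eval 1 = ν * ((τ * p * (κ₁ - κ₂) : ℝ) : ℂ) := by
  simp [hfac, eval_one_Fc, eval_one_Gc]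

lemma mu_zero_of_ne (τ κ₁ κ₂ p : ℝ) (ν : ℂ) (hν : ν ≠ 0) (hτ : τ ≠ 0) (hp : p ≠ 0)
    (hk : κ₁ ≠ κ₂) : (hfac τ κ₁ κ₂ p ν).rootMultiplicity 1 = 0 := by
  apply rootMultiplicity_eq_zero
  rw [IsRoot.def, eval_one_hfac]
  apply mul_ne_zero hν
  rw [Ne, Complex.ofReal_eq_zero]
  intro h
  rcases mul_eq_zero.mp h with h | h
  · rcases mul_eq_zero.mp h with h | h <;> [exact hτ h; exact hp h]
  · exact hk (by linarith [sub_eq_zero.mp h])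

lemma mu_pos_of_ne (τ κ₁ κ₂ p : ℝ) (ν : ℂ) (hk : κ₁ = κ₂) :
    1 ≤ (hfac τ κ₁ κ₂ p ν).rootMultiplicity 1 := by
  apply (rootMultiplicity_pos (hfac_ne τ κ₁ κ₂ p ν)).mpr
  rw [IsRoot.def, eval_one_hfac, hk]
  simp

lemma hfac_zero (τ κ₁ κ₂ p : ℝ) : hfac τ κ₁ κ₂ p 0 = Fc p := by simp [hfac]

lemma mu_at_zero (τ κ₁ κ₂ p : ℝ) (hp : p ≠ 0) :
    (hfac τ κ₁ κ₂ p 0).rootMultiplicity 1 = 2 := by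
  rw [hfac_zero, Fc]
  have hne : (((X : ℂ[X]) - C 1) ^ 2) * (X - C 1 + C ((p : ℝ) : ℂ)) ≠ 0 := by
    rw [← Fc]; exact (Fc_monic p).ne_zero
  rw [rootMultiplicity_mul hne, rootMultiplicity_X_sub_C_pow]
  have : rootMultiplicity 1 ((X : ℂ[X]) - C 1 + C ((p : ℝ) : ℂ)) = 0 := by
    apply rootMultiplicity_eq_zero
    simp [IsRoot.def, Complex.ofReal_eq_zero, hp]
  rw [this]

lemma mu_at_zero' (τ κ₁ κ₂ p : ℝ) (hp : p = 0) :
    (hfac τ κ₁ κ₂ p 0).rootMultiplicity 1 = 3 := by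
  subst hp
  rw [hfac_zero, Fc]
  simp only [Complex.ofReal_zero, map_zero, add_zero]
  rw [← pow_succ, rootMultiplicity_X_sub_C_pow]

lemma rootMultiplicity_msprod (a : ℂ) (s : Multiset ℂ[X]) (h : ∀ q ∈ s, q ≠ 0) :
    s.prod.rootMultiplicity a = (s.map (rootMultiplicity a)).sum := by
  induction s using Multiset.induction_on with
  | empty => simp
  | cons q s ih =>
    have hq : q ≠ 0 := h q (Multiset.mem_cons_self _ _)
    have hs : ∀ r ∈ s, r ≠ 0 := fun r hr => h r (Multiset.mem_cons_of_mem hr)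
    have hsp : s.prod ≠ 0 := Multiset.prod_ne_zero (fun h0 => hs 0 h0 rfl)
    rw [Multiset.prod_cons, rootMultiplicity_mul (mul_ne_zero hq hsp),
      Multiset.map_cons, Multiset.sum_cons, ih hs]

lemma sum_map_ite (s : Multiset ℂ) (μ : ℂ → ℕ) (c : ℕ)
    (h : ∀ x ∈ s, μ x = if x = 0 then c else 0) :
    (s.map μ).sum = c * s.count 0 := by
  induction s using Multiset.induction_on with
  | empty => simp
  | cons q s ih =>
    rw [Multiset.map_cons, Multiset.sum_cons, ih (fun x hx => h x (Multiset.mem_cons_of_mem hx)),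
      h q (Multiset.mem_cons_self _ _), Multiset.count_cons]
    by_cases hq : q = 0
    · simp [hq]; ring
    · simp [hq, eq_comm]


lemma roots_card_charpoly (n : ℕ) (M : Matrix (Fin n) (Fin n) ℂ) :
    M.charpoly.roots.card = n := by
  rw [splits_iff_card_roots.mp (IsAlgClosed.splits _),
    Matrix.charpoly_natDegree_eq_dim]
  simp

lemma map_det_comb (n : ℕ) (M : Matrix (Fin n) (Fin n) ℝ) (f g : ℝ[X]) :
    ((f • (1 : Matrix (Fin n) (Fin n) ℝ[X]) + g • (M.map C)).det).map (algebraMap ℝ ℂ) =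
      ((f.map (algebraMap ℝ ℂ)) • (1 : Matrix (Fin n) (Fin n) ℂ[X]) +
        (g.map (algebraMap ℝ ℂ)) • ((M.map (algebraMap ℝ ℂ)).map C)).det := by
  rw [← coe_mapRingHom, RingHom.map_det]
  congr 1
  ext i j
  by_cases h : i = j <;> simp [Matrix.map_apply, Matrix.one_apply, h, smul_eq_mul]

lemma fpol_map (p : ℝ) : (fpol p).map (algebraMap ℝ ℂ) = Fc p := by
  simp [fpol, Fc, Polynomial.map_mul, Polynomial.map_pow, Polynomial.map_sub,
    Polynomial.map_add, Polynomial.map_one, map_C, map_X]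

lemma gpol_map (τ κ₁ κ₂ p : ℝ) : (gpol τ κ₁ κ₂ p).map (algebraMap ℝ ℂ) = Gc τ κ₁ κ₂ p := by
  simp [gpol, Gc, Polynomial.map_add, Polynomial.map_mul, map_C, map_X,
    Complex.coe_algebraMap]

theorem stmt2 (n : ℕ) (hn : 2 ≤ n) (τ κ₁ κ₂ p : ℝ) (hτ : τ ≠ 0) (hp : 0 ≤ p)
    (L : Matrix (Fin n) (Fin n) ℝ) (r : Fin n → ℝ) (hr : ∀ i, r i ≠ 0)
    (R : Matrix (Fin n) (Fin n) ℝ) (hR : R = Matrix.diagonal r)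
    (hL1 : L *ᵥ (fun _ => (1 : ℝ)) = 0) :
    (Amat n τ κ₁ κ₂ p L R).charpoly.rootMultiplicity 1 = 2 ↔
      (κ₁ ≠ κ₂ ∧ 0 < p ∧ (L * R).charpoly.rootMultiplicity 0 = 1) := by
  classical
  have hφinj : Function.Injective (algebraMap ℝ ℂ) := RingHom.injective _
  set Mc := (L * R).map (algebraMap ℝ ℂ) with hMc
  set ρ := Mc.charpoly.roots with hρ
  set μ : ℂ → ℕ := fun ν => (hfac τ κ₁ κ₂ p ν).rootMultiplicity 1 with hμ
  -- the sum formula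
  have hmapT : ((Amat n τ κ₁ κ₂ p L R).charpoly).rootMultiplicity 1 =
      (((Amat n τ κ₁ κ₂ p L R).charpoly).map (algebraMap ℝ ℂ)).rootMultiplicity 1 :=
    (eq_rootMultiplicity_map hφinj 1).trans (by rw [_root_.map_one])
  have hTmap : ((Amat n τ κ₁ κ₂ p L R).charpoly).map (algebraMap ℝ ℂ) =
      (ρ.map (fun ν => hfac τ κ₁ κ₂ p ν)).prod := by
    rw [charpoly_Amat, map_det_comb, fpol_map, gpol_map, det_comb_eq_prod]
    rfl
  have hS : (Amat n τ κ₁ κ₂ p L R).charpoly.rootMultiplicity 1 = (ρ.map μ).sum := by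
    rw [hmapT, hTmap, rootMultiplicity_msprod]
    · rw [Multiset.map_map]; rfl
    · intro q hq
      obtain ⟨ν, _, rfl⟩ := Multiset.mem_map.mp hq
      exact hfac_ne τ κ₁ κ₂ p ν
  -- count of zero eigenvalue
  have hm : ρ.count 0 = (L * R).charpoly.rootMultiplicity 0 := by
    rw [hρ, Polynomial.count_roots, hMc, Matrix.charpoly_map]
    exact ((eq_rootMultiplicity_map hφinj 0).trans (by rw [_root_.map_zero])).symm
  have hdetL : L.det = 0 := by
    rw [← Matrix.exists_mulVec_eq_zero_iff]
    refine ⟨fun _ => 1, ?_, hL1⟩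
    intro h
    have : (1 : ℝ) = 0 := congrFun h ⟨0, by omega⟩
    norm_num at this
  have hiroot : (L * R).charpoly.IsRoot 0 := by
    rw [IsRoot.def, eval_charpoly'', zero_smul, zero_sub, det_neg, det_mul, hdetL,
      zero_mul, mul_zero]
  have hm1 : 1 ≤ (L * R).charpoly.rootMultiplicity 0 :=
    (rootMultiplicity_pos (L * R).charpoly_monic.ne_zero).mpr hiroot
  have h0mem : (0 : ℂ) ∈ ρ := by
    rw [← Multiset.count_pos, hm]; omega
  have hcard : ρ.card = n := roots_card_charpoly n Mc
  constructor
  · intro hS2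
    have hp0 : 0 < p := by
      rcases hp.lt_or_eq with h | h
      · exact h
      exfalso
      have h3 : μ 0 = 3 := mu_at_zero' τ κ₁ κ₂ p h.symm
      have h4 : μ 0 ≤ (ρ.map μ).sum :=
        Multiset.le_sum_of_mem (Multiset.mem_map_of_mem μ h0mem)
      rw [hS] at hS2
      omega
    have hk : κ₁ ≠ κ₂ := by
      intro hkk
      have hlb : ∀ ν ∈ ρ, (fun ν => if ν = (0:ℂ) then 2 else 1) ν ≤ μ ν := by
        intro ν _
        by_cases hν : ν = 0
        · subst hν; simp only [if_pos rfl]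
          exact (mu_at_zero τ κ₁ κ₂ p hp0.ne').ge
        · simp only [if_neg hν]
          exact mu_pos_of_ne τ κ₁ κ₂ p ν hkk
      have hle := Multiset.sum_map_le_sum_map _ _ hlb
      have hsum : (ρ.map (fun ν => if ν = (0:ℂ) then 2 else 1)).sum =
          1 * ρ.count 0 + ρ.card := by
        have he : ∀ ν ∈ ρ, (fun ν => if ν = (0:ℂ) then 2 else 1) ν =
            (fun ν => (if ν = (0:ℂ) then 1 else 0) + 1) ν := by
          intro ν _; by_cases hν : ν = 0 <;> simp [hν]
        rw [Multiset.map_congr rfl he, Multiset.sum_map_add,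
          sum_map_ite ρ _ 1 (fun x _ => rfl)]
        simp
      rw [hS] at hS2
      rw [hS2] at hle
      rw [hsum, hcard] at hle
      omega
    have hμite : ∀ x ∈ ρ, μ x = if x = 0 then 2 else 0 := by
      intro ν _
      by_cases hν : ν = 0
      · subst hν; simp only [if_pos rfl]; exact mu_at_zero τ κ₁ κ₂ p hp0.ne'
      · simp only [if_neg hν]; exact mu_zero_of_ne τ κ₁ κ₂ p ν hν hτ hp0.ne' hk
    have := sum_map_ite ρ μ 2 hμite
    rw [hS, this] at hS2
    exact ⟨hk, hp0, by omega⟩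
  · rintro ⟨hk, hp0, hm2⟩
    have hμite : ∀ x ∈ ρ, μ x = if x = 0 then 2 else 0 := by
      intro ν _
      by_cases hν : ν = 0
      · subst hν; simp only [if_pos rfl]; exact mu_at_zero τ κ₁ κ₂ p hp0.ne'
      · simp only [if_neg hν]; exact mu_zero_of_ne τ κ₁ κ₂ p ν hν hτ hp0.ne' hk
    rw [hS, sum_map_ite ρ μ 2 hμite, hm, hm2]
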